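/- There exists at most one solution of the differential system (D): if (ψ₁,c₁) and (ψ₂,c₂) are both solutions of (D), then ψ₁ = ψ₂ and c₁ = c₂. -/

import Mathlib

open MeasureTheory Filter Set Topology

namespace Stmt14X

/-- Facts about one solution. -/
lemma solo {fμ H N ψ : ℝ → ℝ} {ε c : ℝ}
    (hε : 0 < ε)
    (hfpos : ∀ x ∈ Set.Icc (0 : ℝ) 1, 0 < fμ x)
    (hH'lb : ∀ x : ℝ, ε < deriv H x)
    (hNpos : ∀ s, 0 < N s)
    (hψC2 : ContDiff ℝ 2 ψ)
    (heq : ∀ s : ℝ,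
      fμ (deriv ψ s) * deriv (deriv ψ) s * deriv H (s * deriv ψ s - ψ s) = c * N s)
    (hbot : Tendsto (deriv ψ) atBot (nhds 0))
    (htop : Tendsto (deriv ψ) atTop (nhds 1)) :
    0 < c ∧ (∀ s, 0 < deriv (deriv ψ) s) ∧ (∀ s, deriv ψ s ∈ Set.Ioo (0:ℝ) 1) := by
  set u := deriv ψ with hu
  have hψC2' : ContDiff ℝ (1+1) ψ := by norm_num at hψC2 ⊢; exact hψC2
  have huC1 : ContDiff ℝ 1 u := (contDiff_succ_iff_deriv.mp hψC2').2.2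
  have hucont : Continuous u := huC1.continuous
  have hudiff : ∀ s, HasDerivAt u (deriv u s) s :=
    fun s => ((huC1.differentiable one_ne_zero) s).hasDerivAt
  have hu'cont : Continuous (deriv u) := huC1.continuous_deriv le_rfl
  have hH'pos : ∀ x : ℝ, 0 < deriv H x := fun x => hε.trans (hH'lb x)
  -- c > 0
  have hcpos : 0 < c := by
    by_contra hc
    push_neg at hc
    have husign : ∀ s, u s ∈ Set.Icc (0:ℝ) 1 → deriv u s ≤ 0 := by
      intro s hs
      by_contra hpos
      push_neg at hpos
      have h1 := heq s
      have h2 : c * N s ≤ 0 := mul_nonpos_of_nonpos_of_nonneg hc (hNpos s).le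
      nlinarith [mul_pos (mul_pos (hfpos _ hs) hpos) (hH'pos (s * u s - ψ s))]
    obtain ⟨sm, hsm⟩ := (hbot.eventually_lt_const (show (0:ℝ) < 1/2 by norm_num)).exists
    obtain ⟨sp, hsp, hsmp⟩ :=
      ((htop.eventually_const_lt (show (3/4:ℝ) < 1 by norm_num)).and
        (eventually_ge_atTop sm)).exists
    -- first hitting time of 3/4 after sm
    set A : Set ℝ := {s | s ∈ Set.Icc sm sp ∧ u s = 3/4} with hA
    have hAne : A.Nonempty := by
      have h34 : (3/4:ℝ) ∈ Set.Icc (u sm) (u sp) := ⟨by linarith, by linarith⟩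
      obtain ⟨t, ht, hut⟩ := intermediate_value_Icc hsmp (hucont.continuousOn) h34
      exact ⟨t, ht, hut⟩
    have hAclosed : IsClosed A := by
      have hAeq : A = Set.Icc sm sp ∩ u ⁻¹' {3/4} := rfl
      rw [hAeq]; exact isClosed_Icc.inter (isClosed_singleton.preimage hucont)
    have hAbdd : BddBelow A := ⟨sm, fun x hx => hx.1.1⟩
    set b := sInf A with hbdef
    have hbA : b ∈ A := hAclosed.csInf_mem hAne hAbdd
    have hub : u b = 3/4 := hbA.2
    have hbmem : b ∈ Set.Icc sm sp := hbA.1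
    have hsmb : sm < b := by
      rcases lt_or_eq_of_le hbmem.1 with h | h
      · exact h
      · exfalso; rw [← h] at hub; linarith
    -- last hitting time of 1/2 before b
    set B : Set ℝ := {s | s ∈ Set.Icc sm b ∧ u s = 1/2} with hB
    have hBne : B.Nonempty := by
      have h12 : (1/2:ℝ) ∈ Set.Icc (u sm) (u b) := ⟨hsm.le, by linarith⟩
      obtain ⟨t, ht, hut⟩ := intermediate_value_Icc hsmb.le (hucont.continuousOn) h12
      exact ⟨t, ht, hut⟩
    have hBclosed : IsClosed B := by
      have hBeq : B = Set.Icc sm b ∩ u ⁻¹' {1/2} := rfl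
      rw [hBeq]; exact isClosed_Icc.inter (isClosed_singleton.preimage hucont)
    have hBbdd : BddAbove B := ⟨b, fun x hx => hx.1.2⟩
    set a := sSup B with hadef
    have haB : a ∈ B := hBclosed.csSup_mem hBne hBbdd
    have hua : u a = 1/2 := haB.2
    have hab : a < b := by
      rcases lt_or_eq_of_le haB.1.2 with h | h
      · exact h
      · exfalso; rw [h] at hua; rw [hua] at hub; norm_num at hub
    -- on [a,b], u stays in [1/2, 3/4]
    have hmid : ∀ s ∈ Set.Icc a b, u s ∈ Set.Icc (1/2:ℝ) (3/4) := by
      intro s hs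
      constructor
      · by_contra hlt
        push_neg at hlt
        have hsb : s < b := by
          rcases lt_or_eq_of_le hs.2 with h | h
          · exact h
          · exfalso; rw [h, hub] at hlt; linarith
        have hsa : a < s := by
          rcases lt_or_eq_of_le hs.1 with h | h
          · exact h
          · exfalso; rw [← h, hua] at hlt; linarith
        obtain ⟨t, ht, hut⟩ := intermediate_value_Icc hsb.le (hucont.continuousOn)
          (⟨hlt.le, by rw [hub]; norm_num⟩ : (1/2:ℝ) ∈ Set.Icc (u s) (u b))
        have htB : t ∈ B := ⟨⟨le_trans haB.1.1 (le_trans hsa.le ht.1), ht.2⟩, hut⟩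
        have := le_csSup hBbdd htB
        have : a < t := lt_of_lt_of_le hsa ht.1
        linarith [le_csSup hBbdd htB]
      · by_contra hgt
        push_neg at hgt
        have hsa : a < s := by
          rcases lt_or_eq_of_le hs.1 with h | h
          · exact h
          · exfalso; rw [← h, hua] at hgt; linarith
        have hsb : s < b := by
          rcases lt_or_eq_of_le hs.2 with h | h
          · exact h
          · exfalso; rw [h, hub] at hgt; linarith
        obtain ⟨t, ht, hut⟩ := intermediate_value_Icc hsa.le (hucont.continuousOn)
          (⟨by rw [hua]; norm_num, hgt.le⟩ : (3/4:ℝ) ∈ Set.Icc (u a) (u s))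
        have htA : t ∈ A := ⟨⟨le_trans haB.1.1 ht.1, le_trans ht.2 (le_trans hsb.le hbmem.2)⟩, hut⟩
        have := csInf_le hAbdd htA
        have : t < b := lt_of_le_of_lt ht.2 hsb
        linarith [csInf_le hAbdd htA]
    -- u is antitone on [a,b]
    have hanti : AntitoneOn u (Set.Icc a b) := by
      apply antitoneOn_of_deriv_nonpos (convex_Icc a b) (hucont.continuousOn)
      · intro x hx
        exact ((hudiff x).differentiableAt).differentiableWithinAt
      · intro x hx
        rw [interior_Icc] at hx
        have hxm := hmid x ⟨hx.1.le, hx.2.le⟩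
        exact husign x ⟨by linarith [hxm.1], by linarith [hxm.2]⟩
    have := hanti ⟨le_refl a, hab.le⟩ ⟨hab.le, le_refl b⟩ hab.le
    rw [hua, hub] at this
    norm_num at this
  -- u' never vanishes
  have hu'ne : ∀ s, deriv u s ≠ 0 := by
    intro s h0
    have h1 := heq s
    rw [h0, mul_zero, zero_mul] at h1
    linarith [mul_pos hcpos (hNpos s)]
  -- there is a point where u = 1/2 and there u' > 0
  obtain ⟨sm, hsm⟩ := (hbot.eventually_lt_const (show (0:ℝ) < 1/2 by norm_num)).exists
  obtain ⟨sp, hsp, hsmp⟩ :=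
    ((htop.eventually_const_lt (show (1/2:ℝ) < 1 by norm_num)).and
      (eventually_ge_atTop sm)).exists
  obtain ⟨s₀, _, hus₀⟩ := intermediate_value_Icc hsmp (hucont.continuousOn)
    (⟨hsm.le, hsp.le⟩ : (1/2:ℝ) ∈ Set.Icc (u sm) (u sp))
  have hu's₀ : 0 < deriv u s₀ := by
    have h1 := heq s₀
    have hf : 0 < fμ (u s₀) := hfpos _ (by rw [hus₀]; constructor <;> norm_num)
    have hH' : 0 < deriv H (s₀ * u s₀ - ψ s₀) := hH'pos _
    by_contra hle
    push_neg at hle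
    have h3 : fμ (u s₀) * deriv u s₀ ≤ 0 := mul_nonpos_of_nonneg_of_nonpos hf.le hle
    have h4 : fμ (u s₀) * deriv u s₀ * deriv H (s₀ * u s₀ - ψ s₀) ≤ 0 :=
      mul_nonpos_of_nonpos_of_nonneg h3 hH'.le
    linarith [mul_pos hcpos (hNpos s₀)]
  -- hence u' > 0 everywhere
  have hu'pos : ∀ s, 0 < deriv u s := by
    intro s
    rcases lt_trichotomy (deriv u s) 0 with h | h | h
    · exfalso
      rcases le_total s₀ s with hss | hss
      · obtain ⟨t, _, ht⟩ := intermediate_value_Icc' hss (hu'cont.continuousOn)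
          (⟨h.le, hu's₀.le⟩ : (0:ℝ) ∈ Set.Icc (deriv u s) (deriv u s₀))
        exact hu'ne t ht
      · obtain ⟨t, _, ht⟩ := intermediate_value_Icc hss (hu'cont.continuousOn)
          (⟨h.le, hu's₀.le⟩ : (0:ℝ) ∈ Set.Icc (deriv u s) (deriv u s₀))
        exact hu'ne t ht
    · exact absurd h (hu'ne s)
    · exact h
  have humono : StrictMono u := strictMono_of_deriv_pos hu'pos
  refine ⟨hcpos, hu'pos, fun s => ⟨?_, ?_⟩⟩
  · have h1 : u (s - 1) < u s := humono (by linarith)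
    have h2 : (0:ℝ) ≤ u (s-1) := by
      refine le_of_tendsto hbot ?_
      filter_upwards [eventually_le_atBot (s-1)] with t ht
      exact (humono.monotone ht)
    linarith
  · have h1 : u s < u (s + 1) := humono (by linarith)
    have h2 : u (s+1) ≤ 1 := by
      refine ge_of_tendsto htop ?_
      filter_upwards [eventually_ge_atTop (s+1)] with t ht
      exact humono.monotone ht
    linarith

end Stmt14X

namespace Stmt14X

lemma key_ineq {fμ H N ψ₁ ψ₂ : ℝ → ℝ} {ε c₁ c₂ : ℝ}
    (hε : 0 < ε)
    (hfpos : ∀ x ∈ Set.Icc (0 : ℝ) 1, 0 < fμ x)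
    (hH : ContDiff ℝ 2 H)
    (hHconv : StrictConvexOn ℝ Set.univ H)
    (hH'lb : ∀ x : ℝ, ε < deriv H x)
    (hNpos : ∀ s, 0 < N s) (hNcont : Continuous N) (hNint : Integrable N)
    (hψ₁C2 : ContDiff ℝ 2 ψ₁)
    (heq₁ : ∀ s : ℝ,
      fμ (deriv ψ₁ s) * deriv (deriv ψ₁) s * deriv H (s * deriv ψ₁ s - ψ₁ s) = c₁ * N s)
    (hbot₁ : Tendsto (deriv ψ₁) atBot (nhds 0))
    (htop₁ : Tendsto (deriv ψ₁) atTop (nhds 1))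
    (hψ₂C2 : ContDiff ℝ 2 ψ₂)
    (heq₂ : ∀ s : ℝ,
      fμ (deriv ψ₂ s) * deriv (deriv ψ₂) s * deriv H (s * deriv ψ₂ s - ψ₂ s) = c₂ * N s)
    (hbot₂ : Tendsto (deriv ψ₂) atBot (nhds 0))
    (htop₂ : Tendsto (deriv ψ₂) atTop (nhds 1))
    (hc : c₂ ≤ c₁) :
    ∀ s, ψ₁ s ≤ ψ₂ s := by
  classical
  obtain ⟨hc₁, hu₁', hu₁mem⟩ := solo hε hfpos hH'lb hNpos hψ₁C2 heq₁ hbot₁ htop₁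
  obtain ⟨hc₂, hu₂', hu₂mem⟩ := solo hε hfpos hH'lb hNpos hψ₂C2 heq₂ hbot₂ htop₂
  set u₁ := deriv ψ₁ with hu₁def
  set u₂ := deriv ψ₂ with hu₂def
  have hψ₁C2' : ContDiff ℝ (1+1) ψ₁ := by norm_num at hψ₁C2 ⊢; exact hψ₁C2
  have hψ₂C2' : ContDiff ℝ (1+1) ψ₂ := by norm_num at hψ₂C2 ⊢; exact hψ₂C2
  have hu₁C1 : ContDiff ℝ 1 u₁ := (contDiff_succ_iff_deriv.mp hψ₁C2').2.2
  have hu₂C1 : ContDiff ℝ 1 u₂ := (contDiff_succ_iff_deriv.mp hψ₂C2').2.2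
  have hu₁cont : Continuous u₁ := hu₁C1.continuous
  have hu₂cont : Continuous u₂ := hu₂C1.continuous
  have hu₁diff : ∀ s, HasDerivAt u₁ (deriv u₁ s) s :=
    fun s => ((hu₁C1.differentiable one_ne_zero) s).hasDerivAt
  have hu₂diff : ∀ s, HasDerivAt u₂ (deriv u₂ s) s :=
    fun s => ((hu₂C1.differentiable one_ne_zero) s).hasDerivAt
  have hψ₁diff : ∀ s, HasDerivAt ψ₁ (u₁ s) s :=
    fun s => ((hψ₁C2.differentiable (by norm_num)) s).hasDerivAt
  have hψ₂diff : ∀ s, HasDerivAt ψ₂ (u₂ s) s :=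
    fun s => ((hψ₂C2.differentiable (by norm_num)) s).hasDerivAt
  have hu₂mono : StrictMono u₂ := strictMono_of_deriv_pos hu₂'
  have hu₁mono : StrictMono u₁ := strictMono_of_deriv_pos hu₁'
  have hH'pos : ∀ x : ℝ, 0 < deriv H x := fun x => hε.trans (hH'lb x)
  have hH'mono : StrictMono (deriv H) := by
    have h := hHconv.strictMonoOn_deriv
      (fun x _ => (hH.differentiable (by norm_num)).differentiableAt)
    exact fun x y hxy => h (mem_univ x) (mem_univ y) hxy
  -- inverse of u₂
  have hexists : ∀ t ∈ Set.Ioo (0:ℝ) 1, ∃ τ, u₂ τ = t := by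
    intro t ht
    obtain ⟨sm, hsm⟩ := (hbot₂.eventually_lt_const ht.1).exists
    obtain ⟨sp, hsp, hsmp⟩ :=
      ((htop₂.eventually_const_lt ht.2).and (eventually_ge_atTop sm)).exists
    obtain ⟨τ, _, hτ⟩ := intermediate_value_Icc hsmp (hu₂cont.continuousOn)
      (⟨hsm.le, hsp.le⟩ : t ∈ Set.Icc (u₂ sm) (u₂ sp))
    exact ⟨τ, hτ⟩
  set w : ℝ → ℝ := fun t => if h : ∃ τ, u₂ τ = t then h.choose else 0 with hwdef
  have hw : ∀ t ∈ Set.Ioo (0:ℝ) 1, u₂ (w t) = t := by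
    intro t ht
    have h := hexists t ht
    simp only [hwdef, dif_pos h]
    exact h.choose_spec
  have hwcont : ∀ t ∈ Set.Ioo (0:ℝ) 1, ContinuousAt w t := by
    intro t ht
    rw [ContinuousAt, tendsto_order]
    constructor
    · intro b hb
      have hub : u₂ b < t := by
        have := hu₂mono hb; rw [hw t ht] at this; linarith
      have hev : ∀ᶠ y in nhds t, y ∈ Set.Ioo (max (u₂ b) 0) 1 :=
        (isOpen_Ioo).eventually_mem ⟨max_lt hub ht.1, ht.2⟩
      filter_upwards [hev] with y hy
      have hy' : y ∈ Set.Ioo (0:ℝ) 1 := ⟨lt_of_le_of_lt (le_max_right _ _) hy.1, hy.2⟩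
      have : u₂ b < u₂ (w y) := by
        rw [hw y hy']; exact lt_of_le_of_lt (le_max_left _ _) hy.1
      exact hu₂mono.lt_iff_lt.mp this
    · intro b hb
      have hub : t < u₂ b := by
        have := hu₂mono hb; rw [hw t ht] at this; linarith
      have hev : ∀ᶠ y in nhds t, y ∈ Set.Ioo (0:ℝ) (min (u₂ b) 1) :=
        (isOpen_Ioo).eventually_mem ⟨ht.1, lt_min_iff.2 ⟨hub, ht.2⟩⟩
      filter_upwards [hev] with y hy
      have hy' : y ∈ Set.Ioo (0:ℝ) 1 := ⟨hy.1, lt_of_lt_of_le hy.2 (min_le_right _ _)⟩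
      have : u₂ (w y) < u₂ b := by
        rw [hw y hy']; exact lt_of_lt_of_le hy.2 (min_le_left _ _)
      exact hu₂mono.lt_iff_lt.mp this
  have hwderiv : ∀ t ∈ Set.Ioo (0:ℝ) 1, HasDerivAt w (deriv u₂ (w t))⁻¹ t := by
    intro t ht
    refine HasDerivAt.of_local_left_inverse (hwcont t ht) (hu₂diff (w t))
      (ne_of_gt (hu₂' (w t))) ?_
    filter_upwards [(isOpen_Ioo).eventually_mem ht] with y hy
    exact hw y hy
  set ρ : ℝ → ℝ := fun s => w (u₁ s) with hρdef
  have hρ : ∀ s, u₂ (ρ s) = u₁ s := fun s => hw (u₁ s) (hu₁mem s)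
  have hρderiv : ∀ s, HasDerivAt ρ ((deriv u₂ (ρ s))⁻¹ * deriv u₁ s) s :=
    fun s => (hwderiv (u₁ s) (hu₁mem s)).comp s (hu₁diff s)
  have hρbot : Tendsto ρ atBot atBot := by
    rw [tendsto_atBot]
    intro b
    have h0 : (0:ℝ) < u₂ b := (hu₂mem b).1
    filter_upwards [hbot₁.eventually_lt_const h0] with s hs
    have : u₂ (ρ s) < u₂ b := by rw [hρ s]; exact hs
    exact (hu₂mono.lt_iff_lt.mp this).le
  have hρtop : Tendsto ρ atTop atTop := by
    rw [tendsto_atTop]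
    intro b
    have h0 : u₂ b < 1 := (hu₂mem b).2
    filter_upwards [htop₁.eventually_const_lt h0] with s hs
    have : u₂ b < u₂ (ρ s) := by rw [hρ s]; exact hs
    exact (hu₂mono.lt_iff_lt.mp this).le
  -- the Gaussian CDF-type function
  set W : ℝ → ℝ := fun s => ∫ x in (0:ℝ)..s, N x with hWdef
  have hWderiv : ∀ s, HasDerivAt W (N s) s := fun s =>
    intervalIntegral.integral_hasDerivAt_right hNint.intervalIntegrable
      (hNcont.stronglyMeasurableAtFilter _ _) hNcont.continuousAt
  have hWmono : StrictMono W :=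
    strictMono_of_deriv_pos (fun s => by rw [(hWderiv s).deriv]; exact hNpos s)
  have hWbot : Tendsto W atBot (nhds (-(∫ x in Set.Iic (0:ℝ), N x))) := by
    have h := MeasureTheory.intervalIntegral_tendsto_integral_Iic (0:ℝ)
      hNint.integrableOn tendsto_id
    have h2 : ∀ s, W s = -(∫ x in s..(0:ℝ), N x) := by
      intro s; rw [intervalIntegral.integral_symm, neg_neg]
    rw [show W = fun s => -(∫ x in s..(0:ℝ), N x) from funext h2]
    exact h.neg
  have hWtop : Tendsto W atTop (nhds (∫ x in Set.Ioi (0:ℝ), N x)) :=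
    MeasureTheory.intervalIntegral_tendsto_integral_Ioi (0:ℝ) hNint.integrableOn tendsto_id
  set V : ℝ → ℝ := fun s => W s - W (ρ s) with hVdef
  have hVbot : Tendsto V atBot (nhds 0) := by
    have := hWbot.sub (hWbot.comp hρbot)
    simpa using this
  have hVtop : Tendsto V atTop (nhds 0) := by
    have := hWtop.sub (hWtop.comp hρtop)
    simpa using this
  set X₁ : ℝ → ℝ := fun s => s * u₁ s - ψ₁ s with hX₁def
  set X₂ : ℝ → ℝ := fun s => s * u₂ s - ψ₂ s with hX₂def
  have hX₁deriv : ∀ s, HasDerivAt X₁ (s * deriv u₁ s) s := by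
    intro s
    have h := ((hasDerivAt_id s).mul (hu₁diff s)).sub (hψ₁diff s)
    refine h.congr_deriv ?_
    simp only [id_eq]; ring
  have hX₂deriv : ∀ s, HasDerivAt X₂ (s * deriv u₂ s) s := by
    intro s
    have h := ((hasDerivAt_id s).mul (hu₂diff s)).sub (hψ₂diff s)
    refine h.congr_deriv ?_
    simp only [id_eq]; ring
  set δ : ℝ → ℝ := fun s => X₁ s - X₂ (ρ s) with hδdef
  have hδderiv : ∀ s, HasDerivAt δ ((s - ρ s) * deriv u₁ s) s := by
    intro s
    have h2 : HasDerivAt (fun s => X₂ (ρ s))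
        (ρ s * deriv u₂ (ρ s) * ((deriv u₂ (ρ s))⁻¹ * deriv u₁ s)) s :=
      (hX₂deriv (ρ s)).comp s (hρderiv s)
    have h3 : ρ s * deriv u₂ (ρ s) * ((deriv u₂ (ρ s))⁻¹ * deriv u₁ s)
        = ρ s * deriv u₁ s := by
      field_simp [ne_of_gt (hu₂' (ρ s))]
    rw [h3] at h2
    have h := (hX₁deriv s).sub h2
    refine h.congr_deriv ?_; ring
  have hδcont : Continuous δ :=
    continuous_iff_continuousAt.2 fun s => (hδderiv s).continuousAt
  have hVcont : Continuous V :=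
    continuous_iff_continuousAt.2 fun s => ((hWderiv s).sub
      ((hWderiv (ρ s)).comp s (hρderiv s))).continuousAt
  -- V decreases strictly where δ < 0
  have hVneg : ∀ s, δ s < 0 → deriv V s < 0 := by
    intro s hs
    have hVd : HasDerivAt V (N s - N (ρ s) * ((deriv u₂ (ρ s))⁻¹ * deriv u₁ s)) s :=
      (hWderiv s).sub ((hWderiv (ρ s)).comp s (hρderiv s))
    rw [hVd.deriv]
    have h0 : s * u₁ s - ψ₁ s < ρ s * u₂ (ρ s) - ψ₂ (ρ s) := by
      simp only [hδdef, hX₁def, hX₂def] at hs; linarith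
    rw [hρ s] at h0
    have hab : deriv H (s * u₁ s - ψ₁ s) < deriv H (ρ s * u₁ s - ψ₂ (ρ s)) := hH'mono h0
    have e1 : c₁ * N s = fμ (u₁ s) * deriv u₁ s * deriv H (s * u₁ s - ψ₁ s) := (heq₁ s).symm
    have e2' := heq₂ (ρ s)
    rw [hρ s] at e2'
    have e2 : c₂ * N (ρ s)
        = fμ (u₁ s) * deriv u₂ (ρ s) * deriv H (ρ s * u₁ s - ψ₂ (ρ s)) := e2'.symm
    have hP : 0 < fμ (u₁ s) := hfpos _ (Set.Ioo_subset_Icc_self (hu₁mem s))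
    have hQ : 0 < deriv u₁ s := hu₁' s
    have hR : 0 < deriv u₂ (ρ s) := hu₂' (ρ s)
    have hA : 0 < deriv H (s * u₁ s - ψ₁ s) := hH'pos _
    have hNfs : N s = fμ (u₁ s) * deriv u₁ s * deriv H (s * u₁ s - ψ₁ s) / c₁ := by
      rw [eq_div_iff (ne_of_gt hc₁), ← e1]; ring
    have hNρ : N (ρ s) * ((deriv u₂ (ρ s))⁻¹ * deriv u₁ s)
        = fμ (u₁ s) * deriv u₁ s * deriv H (ρ s * u₁ s - ψ₂ (ρ s)) / c₂ := by
      have hNr : N (ρ s)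
          = fμ (u₁ s) * deriv u₂ (ρ s) * deriv H (ρ s * u₁ s - ψ₂ (ρ s)) / c₂ := by
        rw [eq_div_iff (ne_of_gt hc₂), ← e2]; ring
      rw [hNr]
      field_simp
    rw [hNfs, hNρ, mul_div_assoc, mul_div_assoc]
    have h1 : deriv H (s * u₁ s - ψ₁ s) / c₁ ≤ deriv H (s * u₁ s - ψ₁ s) / c₂ := by
      gcongr
    have h2 : deriv H (s * u₁ s - ψ₁ s) / c₂ < deriv H (ρ s * u₁ s - ψ₂ (ρ s)) / c₂ :=
      (div_lt_div_iff_of_pos_right hc₂).2 hab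
    have h4 := mul_lt_mul_of_pos_left (h1.trans_lt h2) (mul_pos hP hQ)
    linarith
  have Vdec : ∀ x y : ℝ, x < y → (∀ t ∈ Set.Ioo x y, δ t < 0) → V y < V x := by
    intro x y hxy hneg
    have h := strictAntiOn_of_deriv_neg (convex_Icc x y) (hVcont.continuousOn)
      (fun t ht => by rw [interior_Icc] at ht; exact hVneg t (hneg t ht))
    exact h ⟨le_refl x, hxy.le⟩ ⟨hxy.le, le_refl y⟩ hxy
  -- sign of V vs ρ
  have hVle : ∀ s, s ≤ ρ s → V s ≤ 0 := by
    intro s h; simp only [hVdef]; have := hWmono.monotone h; linarith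
  have hVge : ∀ s, ρ s ≤ s → 0 ≤ V s := by
    intro s h; simp only [hVdef]; have := hWmono.monotone h; linarith
  -- boundary derivative signs
  have hslope_right : ∀ a z : ℝ, a < z → δ a = 0 → (∀ t ∈ Set.Ioc a z, δ t ≤ 0) → V a ≤ 0 := by
    intro a z haz h0 hneg
    have hdw : HasDerivWithinAt δ ((a - ρ a) * deriv u₁ a) (Set.Ioi a) a :=
      (hδderiv a).hasDerivWithinAt
    rw [hasDerivWithinAt_iff_tendsto_slope,
      Set.diff_singleton_eq_self (by simp : a ∉ Set.Ioi a)] at hdw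
    have hle : (a - ρ a) * deriv u₁ a ≤ 0 := by
      refine le_of_tendsto hdw ?_
      filter_upwards [Ioc_mem_nhdsGT haz] with t ht
      rw [slope_def_field, h0, sub_zero]
      exact div_nonpos_iff.mpr (Or.inr ⟨hneg t ht, by linarith [ht.1]⟩)
    have haρ : a ≤ ρ a := by nlinarith [hu₁' a]
    exact hVle a haρ
  have hslope_left : ∀ b z : ℝ, z < b → δ b = 0 → (∀ t ∈ Set.Ico z b, δ t ≤ 0) → 0 ≤ V b := by
    intro b z hzb h0 hneg
    have hdw : HasDerivWithinAt δ ((b - ρ b) * deriv u₁ b) (Set.Iio b) b :=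
      (hδderiv b).hasDerivWithinAt
    rw [hasDerivWithinAt_iff_tendsto_slope,
      Set.diff_singleton_eq_self (by simp : b ∉ Set.Iio b)] at hdw
    have hle : 0 ≤ (b - ρ b) * deriv u₁ b := by
      refine ge_of_tendsto hdw ?_
      filter_upwards [Ico_mem_nhdsLT hzb] with t ht
      rw [slope_def_field, h0, sub_zero]
      exact div_nonneg_iff.mpr (Or.inr ⟨hneg t ht, by linarith [ht.2]⟩)
    have hρb : ρ b ≤ b := by nlinarith [hu₁' b]
    exact hVge b hρb
  -- MAIN CLAIM : δ ≥ 0 everywhere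
  have hmain : ∀ s, 0 ≤ δ s := by
    by_contra hcon
    push_neg at hcon
    obtain ⟨sx, hsx⟩ := hcon
    set A : Set ℝ := {t | t ≤ sx ∧ δ t = 0} with hAdef
    set B : Set ℝ := {t | sx ≤ t ∧ δ t = 0} with hBdef
    have hAclosed : IsClosed A := by
      have : A = Set.Iic sx ∩ δ ⁻¹' {0} := rfl
      rw [this]; exact isClosed_Iic.inter (isClosed_singleton.preimage hδcont)
    have hBclosed : IsClosed B := by
      have : B = Set.Ici sx ∩ δ ⁻¹' {0} := rfl
      rw [this]; exact isClosed_Ici.inter (isClosed_singleton.preimage hδcont)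
    -- IVT helpers
    have hIVTleft : ∀ t ≤ sx, 0 < δ t → ∃ r, t ≤ r ∧ r ≤ sx ∧ δ r = 0 := by
      intro t ht hpos
      have htx : t < sx := by
        rcases eq_or_lt_of_le ht with h | h
        · exfalso; rw [h] at hpos; linarith
        · exact h
      obtain ⟨r, hr, hr0⟩ := intermediate_value_Icc' htx.le (hδcont.continuousOn)
        (⟨hsx.le, hpos.le⟩ : (0:ℝ) ∈ Set.Icc (δ sx) (δ t))
      exact ⟨r, hr.1, hr.2, hr0⟩
    have hIVTright : ∀ t, sx ≤ t → 0 < δ t → ∃ r, sx ≤ r ∧ r ≤ t ∧ δ r = 0 := by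
      intro t ht hpos
      have htx : sx < t := by
        rcases eq_or_lt_of_le ht with h | h
        · exfalso; rw [← h] at hpos; linarith
        · exact h
      obtain ⟨r, hr, hr0⟩ := intermediate_value_Icc htx.le (hδcont.continuousOn)
        (⟨hsx.le, hpos.le⟩ : (0:ℝ) ∈ Set.Icc (δ sx) (δ t))
      exact ⟨r, hr.1, hr.2, hr0⟩
    -- Left side: either a last zero a < sx with δ < 0 on (a, sx], or δ < 0 on (-∞, sx]
    have hLEFT : (∃ a, a < sx ∧ δ a = 0 ∧ ∀ t, a < t → t ≤ sx → δ t < 0)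
        ∨ (∀ t, t ≤ sx → δ t < 0) := by
      by_cases hAne : A.Nonempty
      · left
        have hAbdd : BddAbove A := ⟨sx, fun x hx => hx.1⟩
        have haA : sSup A ∈ A := hAclosed.csSup_mem hAne hAbdd
        set a := sSup A with hadef
        have hax : a < sx := by
          rcases eq_or_lt_of_le haA.1 with h | h
          · exfalso; rw [h] at haA; have := haA.2; linarith
          · exact h
        refine ⟨a, hax, haA.2, ?_⟩
        intro t hat htx
        rcases lt_trichotomy (δ t) 0 with h | h | h
        · exact h
        · exact absurd (le_csSup hAbdd ⟨htx, h⟩) (not_le.2 hat)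
        · exfalso
          obtain ⟨r, hr1, hr2, hr0⟩ := hIVTleft t htx h
          exact absurd (le_csSup hAbdd ⟨hr2, hr0⟩) (not_le.2 (lt_of_lt_of_le hat hr1))
      · right
        intro t htx
        rcases lt_trichotomy (δ t) 0 with h | h | h
        · exact h
        · exact absurd ⟨t, htx, h⟩ hAne
        · exfalso
          obtain ⟨r, hr1, hr2, hr0⟩ := hIVTleft t htx h
          exact absurd ⟨r, hr2, hr0⟩ hAne
    have hRIGHT : (∃ b, sx < b ∧ δ b = 0 ∧ ∀ t, sx ≤ t → t < b → δ t < 0)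
        ∨ (∀ t, sx ≤ t → δ t < 0) := by
      by_cases hBne : B.Nonempty
      · left
        have hBbdd : BddBelow B := ⟨sx, fun x hx => hx.1⟩
        have hbB : sInf B ∈ B := hBclosed.csInf_mem hBne hBbdd
        set b := sInf B with hbdef
        have hxb : sx < b := by
          rcases eq_or_lt_of_le hbB.1 with h | h
          · exfalso; rw [← h] at hbB; have := hbB.2; linarith
          · exact h
        refine ⟨b, hxb, hbB.2, ?_⟩
        intro t hxt htb
        rcases lt_trichotomy (δ t) 0 with h | h | h
        · exact h
        · exact absurd (csInf_le hBbdd ⟨hxt, h⟩) (not_le.2 htb)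
        · exfalso
          obtain ⟨r, hr1, hr2, hr0⟩ := hIVTright t hxt h
          exact absurd (csInf_le hBbdd ⟨hr1, hr0⟩) (not_le.2 (lt_of_le_of_lt hr2 htb))
      · right
        intro t hxt
        rcases lt_trichotomy (δ t) 0 with h | h | h
        · exact h
        · exact absurd ⟨t, hxt, h⟩ hBne
        · exfalso
          obtain ⟨r, hr1, hr2, hr0⟩ := hIVTright t hxt h
          exact absurd ⟨r, hr1, hr0⟩ hBne
    -- limit-based bounds
    have hVtop_le : ∀ y : ℝ, (∀ t, y < t → δ t < 0) → 0 ≤ V (y + 1) := by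
      intro y hneg
      refine le_of_tendsto hVtop ?_
      filter_upwards [eventually_gt_atTop (y + 1)] with t ht
      exact (Vdec (y + 1) t ht (fun r hr => hneg r (by linarith [hr.1]))).le
    have hVbot_ge : ∀ y : ℝ, (∀ t, t < y → δ t < 0) → V (y - 1) ≤ 0 := by
      intro y hneg
      refine ge_of_tendsto hVbot ?_
      filter_upwards [eventually_lt_atBot (y - 1)] with t ht
      exact (Vdec t (y - 1) ht (fun r hr => hneg r (by linarith [hr.2]))).le
    rcases hLEFT with ⟨a, hax, ha0, hnegL⟩ | hnegL <;>
      rcases hRIGHT with ⟨b, hxb, hb0, hnegR⟩ | hnegR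
    · -- both finite: dip
      have hnegIoo : ∀ t ∈ Set.Ioo a b, δ t < 0 := by
        intro t ht
        rcases le_or_gt t sx with h | h
        · exact hnegL t ht.1 h
        · exact hnegR t h.le ht.2
      have hVa : V a ≤ 0 := hslope_right a sx hax ha0 (fun t ht => (hnegL t ht.1 ht.2).le)
      have hVb : 0 ≤ V b := hslope_left b sx hxb hb0 (fun t ht => (hnegR t ht.1 ht.2).le)
      have := Vdec a b (hax.trans hxb) hnegIoo
      linarith
    · -- a finite, unbounded right
      have hnegIoi : ∀ t, a < t → δ t < 0 := by
        intro t ht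
        rcases le_or_gt t sx with h | h
        · exact hnegL t ht h
        · exact hnegR t h.le
      have hVa : V a ≤ 0 := hslope_right a sx hax ha0 (fun t ht => (hnegL t ht.1 ht.2).le)
      have h1 : V (a + 1) < V a :=
        Vdec a (a + 1) (by linarith) (fun r hr => hnegIoi r hr.1)
      have h2 : 0 ≤ V (a + 1) := hVtop_le a hnegIoi
      linarith
    · -- unbounded left, b finite
      have hnegIio : ∀ t, t < b → δ t < 0 := by
        intro t ht
        rcases le_or_gt t sx with h | h
        · exact hnegL t h
        · exact hnegR t h.le ht
      have hVb : 0 ≤ V b := hslope_left b sx hxb hb0 (fun t ht => (hnegR t ht.1 ht.2).le)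
      have h1 : V b < V (b - 1) :=
        Vdec (b - 1) b (by linarith) (fun r hr => hnegIio r hr.2)
      have h2 : V (b - 1) ≤ 0 := hVbot_ge b hnegIio
      linarith
    · -- δ < 0 everywhere
      have hneg : ∀ t : ℝ, δ t < 0 := by
        intro t
        rcases le_or_gt t sx with h | h
        · exact hnegL t h
        · exact hnegR t h.le
      have h1 : V (sx + 1) < V sx := Vdec sx (sx + 1) (by linarith) (fun r _ => hneg r)
      have h2 : 0 ≤ V (sx + 1) := hVtop_le sx (fun t _ => hneg t)
      have h3 : V (sx - 1) ≤ 0 := hVbot_ge sx (fun t _ => hneg t)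
      have h4 : V sx < V (sx - 1) := Vdec (sx - 1) sx (by linarith) (fun r _ => hneg r)
      linarith
  -- conclude
  have hconv : ∀ σ s : ℝ, ψ₂ σ + (s - σ) * u₂ σ ≤ ψ₂ s := by
    intro σ s
    rcases lt_trichotomy σ s with h | h | h
    · obtain ⟨ξ, hξ, hslope⟩ := exists_hasDerivAt_eq_slope ψ₂ u₂ h
        (hψ₂C2.continuous.continuousOn) (fun x _ => hψ₂diff x)
      have hm : u₂ σ ≤ u₂ ξ := (hu₂mono.monotone hξ.1.le)
      have hs : ψ₂ s - ψ₂ σ = u₂ ξ * (s - σ) := by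
        rw [hslope]; exact (div_mul_cancel₀ _ (sub_ne_zero.2 h.ne')).symm
      nlinarith
    · rw [h]; simp
    · obtain ⟨ξ, hξ, hslope⟩ := exists_hasDerivAt_eq_slope ψ₂ u₂ h
        (hψ₂C2.continuous.continuousOn) (fun x _ => hψ₂diff x)
      have hm : u₂ ξ ≤ u₂ σ := (hu₂mono.monotone hξ.2.le)
      have hs : ψ₂ σ - ψ₂ s = u₂ ξ * (σ - s) := by
        rw [hslope]; exact (div_mul_cancel₀ _ (sub_ne_zero.2 h.ne')).symm
      nlinarith
  intro s
  have h1 : ψ₁ s = s * u₁ s - X₁ s := by simp [hX₁def]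
  have h2 : X₂ (ρ s) ≤ X₁ s := by have := hmain s; simp only [hδdef] at this; linarith
  have h3 : s * u₁ s - X₁ s ≤ s * u₁ s - X₂ (ρ s) := by linarith
  have h4 : s * u₁ s - X₂ (ρ s) = ψ₂ (ρ s) + (s - ρ s) * u₂ (ρ s) := by
    simp only [hX₂def]; rw [← hρ s]; ring
  rw [h1]
  calc s * u₁ s - X₁ s ≤ s * u₁ s - X₂ (ρ s) := h3
    _ = ψ₂ (ρ s) + (s - ρ s) * u₂ (ρ s) := h4
    _ ≤ ψ₂ s := hconv (ρ s) s

end Stmt14X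

open MeasureTheory Filter

/-- Uniqueness of solutions of the differential system (D): if
`(ψ₁,c₁)` and `(ψ₂,c₂)` both solve (D), then `ψ₁ = ψ₂` and `c₁ = c₂`. -/
theorem stmt14 (fμ H : ℝ → ℝ) (ε K : ℝ)
    (hε : 0 < ε) (hεK : ε < K)
    (hfC1 : ContDiffOn ℝ 1 fμ (Set.Icc 0 1))
    (hfpos : ∀ x ∈ Set.Icc (0 : ℝ) 1, 0 < fμ x)
    (hH : ContDiff ℝ 2 H)
    (hHconv : StrictConvexOn ℝ Set.univ H)
    (hH'lb : ∀ x : ℝ, ε < deriv H x) (hH'ub : ∀ x : ℝ, deriv H x < K)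
    (N : ℝ → ℝ) (hN : ∀ s, N s = Real.exp (-(s ^ 2) / 2) / Real.sqrt (2 * Real.pi))
    (ψ₁ ψ₂ : ℝ → ℝ) (c₁ c₂ : ℝ)
    (hψ₁C2 : ContDiff ℝ 2 ψ₁)
    (heq₁ : ∀ s : ℝ,
      fμ (deriv ψ₁ s) * deriv (deriv ψ₁) s * deriv H (s * deriv ψ₁ s - ψ₁ s) = c₁ * N s)
    (hbot₁ : Tendsto (deriv ψ₁) atBot (nhds 0))
    (htop₁ : Tendsto (deriv ψ₁) atTop (nhds 1))
    (hint₁ : Integrable (fun z => ψ₁ z * N z))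
    (hzero₁ : (∫ z, ψ₁ z * N z) = 0)
    (hψ₂C2 : ContDiff ℝ 2 ψ₂)
    (heq₂ : ∀ s : ℝ,
      fμ (deriv ψ₂ s) * deriv (deriv ψ₂) s * deriv H (s * deriv ψ₂ s - ψ₂ s) = c₂ * N s)
    (hbot₂ : Tendsto (deriv ψ₂) atBot (nhds 0))
    (htop₂ : Tendsto (deriv ψ₂) atTop (nhds 1))
    (hint₂ : Integrable (fun z => ψ₂ z * N z))
    (hzero₂ : (∫ z, ψ₂ z * N z) = 0) :
    ψ₁ = ψ₂ ∧ c₁ = c₂ := by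
  have hNpos : ∀ s, 0 < N s := by
    intro s
    rw [hN s]
    have h2π : (0:ℝ) < 2 * Real.pi := by positivity
    exact div_pos (Real.exp_pos _) (Real.sqrt_pos.2 h2π)
  have hNeq : N = fun s => Real.exp (-(s ^ 2) / 2) / Real.sqrt (2 * Real.pi) := funext hN
  have hNcont : Continuous N := by
    rw [hNeq]
    exact (Real.continuous_exp.comp (by continuity)).div_const _
  have hNint : Integrable N := by
    rw [hNeq]
    have h := integrable_exp_neg_mul_sq (show (0:ℝ) < 1/2 by norm_num)
    have heq : (fun s : ℝ => Real.exp (-(s ^ 2) / 2) / Real.sqrt (2 * Real.pi)) =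
        fun s : ℝ => (Real.sqrt (2 * Real.pi))⁻¹ * Real.exp (-(1/2) * s ^ 2) := by
      funext s
      rw [div_eq_inv_mul]
      ring_nf
    rw [heq]
    exact h.const_mul _
  -- generic finishing step from a one-sided inequality
  have key0 : ∀ f g : ℝ → ℝ, Continuous f → Continuous g →
      Integrable (fun z => f z * N z) → Integrable (fun z => g z * N z) →
      (∫ z, f z * N z) = 0 → (∫ z, g z * N z) = 0 → (∀ s, f s ≤ g s) → f = g := by
    intro f g hfc hgc hfi hgi hf0 hg0 hle
    have hsub : (fun z => (g z - f z) * N z) = fun z => g z * N z - f z * N z := by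
      funext z; ring
    have hint : Integrable (fun z => (g z - f z) * N z) := by
      rw [hsub]; exact hgi.sub hfi
    have hzero : (∫ z, (g z - f z) * N z) = 0 := by
      rw [hsub, integral_sub hgi hfi, hg0, hf0]; ring
    have hnn : (0:ℝ → ℝ) ≤ fun z => (g z - f z) * N z := by
      intro z
      exact mul_nonneg (by linarith [hle z]) (hNpos z).le
    have hae := (integral_eq_zero_iff_of_nonneg hnn hint).1 hzero
    have hcont : Continuous fun z => (g z - f z) * N z := ((hgc.sub hfc).mul hNcont)
    have hfun : (fun z => (g z - f z) * N z) = 0 :=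
      (Continuous.ae_eq_iff_eq (μ := volume) hcont continuous_const).1 hae
    funext z
    have hz := congrFun hfun z
    simp only [Pi.zero_apply] at hz
    rcases mul_eq_zero.1 hz with h | h
    · linarith
    · exact absurd h (ne_of_gt (hNpos z))
  have hψeq : ψ₁ = ψ₂ := by
    rcases le_total c₂ c₁ with h | h
    · exact key0 ψ₁ ψ₂ hψ₁C2.continuous hψ₂C2.continuous hint₁ hint₂ hzero₁ hzero₂
        (Stmt14X.key_ineq hε hfpos hH hHconv hH'lb hNpos hNcont hNint
          hψ₁C2 heq₁ hbot₁ htop₁ hψ₂C2 heq₂ hbot₂ htop₂ h)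
    · exact (key0 ψ₂ ψ₁ hψ₂C2.continuous hψ₁C2.continuous hint₂ hint₁ hzero₂ hzero₁
        (Stmt14X.key_ineq hε hfpos hH hHconv hH'lb hNpos hNcont hNint
          hψ₂C2 heq₂ hbot₂ htop₂ hψ₁C2 heq₁ hbot₁ htop₁ h)).symm
  refine ⟨hψeq, ?_⟩
  have h1 := heq₁ 0
  have h2 := heq₂ 0
  rw [hψeq] at h1
  rw [h1] at h2
  exact mul_right_cancel₀ (ne_of_gt (hNpos 0)) h2
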